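/- Fix a β-sequence [·]_β. Let (P_n)_{n≥0} be an admissible polynomial sequence with lowering operator A and β-generating function H(x,z) = Σ_{n≥0} (1/[n]_β!) P_n(x) z^n. If A commutes with D_β on ℂ[x] (A ∘ D_β = D_β ∘ A), then there exists u ∈ 𝒫₀,₁ such that Σ_{n≥0} (1/[n]_β!) (D_β P_n)(x) z^n = u(z) · H(x,z) in ℂ[x][[z]]. -/

import Mathlib

/-- The β-factorial `[n]_β! = ∏_{i=1}^n [i]_β`. -/
noncomputable def betaFact (β : ℕ → ℝ) (n : ℕ) : ℝ := ∏ i ∈ Finset.range n, β (i + 1)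

/-- if the lowering operator `A` of an admissible polynomial sequence commutes
with `D_β`, then there is `u ∈ 𝒫₀,₁` with
`Σ (1/[n]_β!) (D_β P_n)(x) zⁿ = u(z) · H(x,z)`. -/
theorem stmt_11 (β : ℕ → ℝ) (hβ0 : β 0 = 0) (hβ1 : β 1 = 1) (hβpos : ∀ n, 1 ≤ n → 0 < β n)
    (P : ℕ → Polynomial ℂ)
    (hmonic : ∀ n, (P n).Monic) (hdeg : ∀ n, (P n).natDegree = n)
    (hzero : ∀ n, 1 ≤ n → (P n).coeff 0 = 0)
    (D A : Module.End ℂ (Polynomial ℂ))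
    (hD : ∀ n : ℕ, D (Polynomial.X ^ n) = ((β n : ℂ)) • Polynomial.X ^ (n - 1))
    (hA : ∀ n : ℕ, A (P n) = ((β n : ℂ)) • P (n - 1))
    (hcomm : A * D = D * A) :
    ∃ u : PowerSeries ℂ,
      PowerSeries.constantCoeff u = 0 ∧ PowerSeries.coeff 1 u = 1 ∧
      PowerSeries.mk (fun n => ((betaFact β n : ℂ))⁻¹ • D (P n)) =
        PowerSeries.map (Polynomial.C : ℂ →+* Polynomial ℂ) u *
          PowerSeries.mk (fun n => ((betaFact β n : ℂ))⁻¹ • P n) := by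
  classical
  -- basic nonvanishing facts
  have hβne : ∀ n, 1 ≤ n → (β n : ℂ) ≠ 0 := fun n hn => by
    exact_mod_cast (hβpos n hn).ne'
  have hFpos : ∀ n, 0 < betaFact β n := by
    intro n
    exact Finset.prod_pos fun i _ => hβpos (i + 1) (Nat.le_add_left 1 i)
  have hFne : ∀ n, ((betaFact β n : ℝ) : ℂ) ≠ 0 := fun n => by
    exact_mod_cast (hFpos n).ne'
  have hF0 : betaFact β 0 = 1 := by simp [betaFact]
  have hFsucc : ∀ m, ((betaFact β (m + 1) : ℝ) : ℂ)
      = ((betaFact β m : ℝ) : ℂ) * (β (m + 1) : ℂ) := by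
    intro m
    push_cast [betaFact, Finset.prod_range_succ]
    ring
  have hFinv : ∀ m, ((betaFact β (m + 1) : ℝ) : ℂ)⁻¹ * (β (m + 1) : ℂ)
      = ((betaFact β m : ℝ) : ℂ)⁻¹ := by
    intro m
    rw [hFsucc m, mul_inv, mul_assoc, inv_mul_cancel₀ (hβne (m + 1) (Nat.le_add_left 1 m)),
      mul_one]
  -- small polynomials
  have hP0 : P 0 = 1 := (hmonic 0).natDegree_eq_zero.mp (hdeg 0)
  have hP1 : P 1 = Polynomial.X := by
    have h := (hmonic 1).eq_X_add_C (hdeg 1)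
    rw [hzero 1 le_rfl] at h
    simpa using h
  have hAP0 : A (P 0) = 0 := by
    have := hA 0
    rw [hβ0] at this
    simpa using this
  have hDP0 : D (P 0) = 0 := by
    have h := hD 0
    rw [hβ0] at h
    simpa [hP0] using h
  have hDP1 : D (P 1) = 1 := by
    have h := hD 1
    rw [hβ1] at h
    simpa [hP1] using h
  have hAC : ∀ a : ℂ, A (Polynomial.C a) = 0 := by
    intro a
    have : (Polynomial.C a : Polynomial ℂ) = a • P 0 := by
      rw [hP0, Polynomial.smul_eq_C_mul, mul_one]
    rw [this, map_smul, hAP0, smul_zero]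
  -- decomposition lemma
  have hdecomp : ∀ (d : ℕ) (Q : Polynomial ℂ), Q.natDegree ≤ d + 1 →
      (Q - Q.coeff (d + 1) • P (d + 1)).natDegree ≤ d := by
    intro d Q hQ
    rw [Polynomial.natDegree_le_iff_coeff_eq_zero]
    intro m hm
    rcases eq_or_lt_of_le (Nat.succ_le_of_lt hm) with h | h
    · rw [Polynomial.coeff_sub, Polynomial.coeff_smul, ← h]
      have : (P (d + 1)).coeff (d + 1) = 1 := by
        have := (hmonic (d + 1)).coeff_natDegree
        rwa [hdeg (d + 1)] at this
      rw [this, smul_eq_mul, mul_one, sub_self]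
    · have e1 : Q.coeff m = 0 := Polynomial.coeff_eq_zero_of_natDegree_lt (lt_of_le_of_lt hQ h)
      have e2 : (P (d + 1)).coeff m = 0 := by
        refine Polynomial.coeff_eq_zero_of_natDegree_lt ?_
        rw [hdeg]; exact h
      rw [Polynomial.coeff_sub, Polynomial.coeff_smul, e1, e2, smul_zero, sub_self]
  -- degree bound for A
  have hAdeg : ∀ (d : ℕ) (Q : Polynomial ℂ), Q.natDegree ≤ d →
      (A Q).degree < (d : WithBot ℕ) := by
    intro d
    induction d with
    | zero =>
      intro Q hQ
      rw [Polynomial.eq_C_of_natDegree_le_zero hQ, hAC, Polynomial.degree_zero]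
      exact_mod_cast WithBot.bot_lt_coe 0
    | succ d ih =>
      intro Q hQ
      have h1 := ih (Q - Q.coeff (d + 1) • P (d + 1)) (hdecomp d Q hQ)
      have hsplit : A Q = A (Q - Q.coeff (d + 1) • P (d + 1))
          + (Q.coeff (d + 1) * (β (d + 1) : ℂ)) • P d := by
        rw [map_sub, map_smul, hA (d + 1)]
        simp only [Nat.add_sub_cancel]
        rw [smul_smul]
        abel
      rw [hsplit]
      refine lt_of_le_of_lt (Polynomial.degree_add_le _ _) (max_lt ?_ ?_)
      · exact lt_trans h1 (by exact_mod_cast Nat.lt_succ_self d)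
      · refine lt_of_le_of_lt (Polynomial.degree_smul_le _ _) ?_
        have : (P d).degree ≤ (d : WithBot ℕ) := by
          have h := Polynomial.degree_le_natDegree (p := P d)
          rwa [hdeg d] at h
        exact lt_of_le_of_lt this (by exact_mod_cast Nat.lt_succ_self d)
  -- top coefficient of A Q
  have hAcoeff : ∀ (d : ℕ) (Q : Polynomial ℂ), Q.natDegree ≤ d + 1 →
      (A Q).coeff d = (β (d + 1) : ℂ) * Q.coeff (d + 1) := by
    intro d Q hQ
    have hsplit : A Q = A (Q - Q.coeff (d + 1) • P (d + 1))
        + (Q.coeff (d + 1) * (β (d + 1) : ℂ)) • P d := by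
      rw [map_sub, map_smul, hA (d + 1)]
      simp only [Nat.add_sub_cancel]
      rw [smul_smul]
      abel
    rw [hsplit, Polynomial.coeff_add,
      Polynomial.coeff_eq_zero_of_degree_lt (hAdeg d _ (hdecomp d Q hQ)),
      Polynomial.coeff_smul]
    have : (P d).coeff d = 1 := by
      have := (hmonic d).coeff_natDegree
      rwa [hdeg d] at this
    rw [this, smul_eq_mul, mul_one, zero_add, mul_comm]
  -- kernel lemma
  have hker : ∀ Q : Polynomial ℂ, A Q = 0 → Q.coeff 0 = 0 → Q = 0 := by
    intro Q h0 hc0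
    by_contra hne
    rcases Nat.eq_zero_or_pos Q.natDegree with hd | hd
    · exact hne (by rw [Polynomial.eq_C_of_natDegree_le_zero hd.le, hc0, map_zero])
    · obtain ⟨e, he⟩ := Nat.exists_eq_add_of_le hd
      have hcoe := hAcoeff e Q (by omega)
      rw [h0, Polynomial.coeff_zero] at hcoe
      have hlead : Q.coeff (e + 1) ≠ 0 := by
        have : Q.natDegree = e + 1 := by omega
        rw [← this]
        exact Polynomial.leadingCoeff_ne_zero.mpr hne
      exact hlead (by
        have := (mul_eq_zero.mp hcoe.symm).resolve_left (hβne (e + 1) (Nat.le_add_left 1 e))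
        exact this)
  have huniq : ∀ Q R : Polynomial ℂ, A Q = A R → Q.coeff 0 = R.coeff 0 → Q = R := by
    intro Q R h1 h2
    have := hker (Q - R) (by rw [map_sub, h1, sub_self]) (by
      rw [Polynomial.coeff_sub, h2, sub_self])
    exact sub_eq_zero.mp this
  -- the coefficients of u
  set c : ℕ → ℂ := fun k => ((betaFact β k : ℝ) : ℂ)⁻¹ * (D (P k)).coeff 0 with hc
  have hc0 : c 0 = 0 := by simp [hc, hDP0]
  have hc1 : c 1 = 1 := by
    simp [hc, hDP1, betaFact, hβ1]
  -- the key identity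
  have key : ∀ n : ℕ, ((betaFact β n : ℝ) : ℂ)⁻¹ • D (P n)
      = ∑ k ∈ Finset.range (n + 1),
          c k • (((betaFact β (n - k) : ℝ) : ℂ)⁻¹ • P (n - k)) := by
    intro n
    induction n with
    | zero => simp [hDP0, hc0]
    | succ n ih =>
      refine huniq _ _ ?_ ?_
      · -- apply A to both sides
        have hAD : A (D (P (n + 1))) = (β (n + 1) : ℂ) • D (P n) := by
          calc A (D (P (n + 1))) = (A * D) (P (n + 1)) := rfl
            _ = (D * A) (P (n + 1)) := by rw [hcomm]
            _ = D (A (P (n + 1))) := rfl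
            _ = D ((β (n + 1) : ℂ) • P n) := by rw [hA (n + 1)]; norm_num
            _ = (β (n + 1) : ℂ) • D (P n) := map_smul _ _ _
        have hlhs : A (((betaFact β (n + 1) : ℝ) : ℂ)⁻¹ • D (P (n + 1)))
            = ((betaFact β n : ℝ) : ℂ)⁻¹ • D (P n) := by
          rw [map_smul, hAD, smul_smul, hFinv n]
        rw [hlhs, ih, map_sum]
        conv_rhs => rw [Finset.sum_range_succ]
        have hlast : A (c (n + 1) • (((betaFact β (n + 1 - (n + 1)) : ℝ) : ℂ)⁻¹
            • P (n + 1 - (n + 1)))) = 0 := by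
          simp only [Nat.sub_self]
          rw [map_smul, map_smul, hAP0, smul_zero, smul_zero]
        rw [hlast, add_zero]
        refine (Finset.sum_congr rfl ?_).symm
        intro k hk
        have hkn : k ≤ n := Nat.lt_succ_iff.mp (Finset.mem_range.mp hk)
        have h1 : n + 1 - k = (n - k) + 1 := by omega
        rw [map_smul, map_smul, h1, hA ((n - k) + 1)]
        simp only [Nat.add_sub_cancel]
        rw [smul_smul, smul_smul, mul_assoc, hFinv (n - k), ← smul_smul]
      · -- constant coefficients
        have hlhs : (((betaFact β (n + 1) : ℝ) : ℂ)⁻¹ • D (P (n + 1))).coeff 0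
            = c (n + 1) := by
          rw [Polynomial.coeff_smul, smul_eq_mul]
        rw [hlhs, Polynomial.finset_sum_coeff, Finset.sum_range_succ]
        have hlast : (c (n + 1) • (((betaFact β (n + 1 - (n + 1)) : ℝ) : ℂ)⁻¹
            • P (n + 1 - (n + 1)))).coeff 0 = c (n + 1) := by
          simp only [Nat.sub_self]
          rw [hP0, hF0]
          simp
        rw [hlast]
        have hrest : ∀ k ∈ Finset.range (n + 1),
            (c k • (((betaFact β (n + 1 - k) : ℝ) : ℂ)⁻¹ • P (n + 1 - k))).coeff 0 = 0 := by
          intro k hk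
          have hkn : k ≤ n := Nat.lt_succ_iff.mp (Finset.mem_range.mp hk)
          rw [Polynomial.coeff_smul, Polynomial.coeff_smul,
            hzero (n + 1 - k) (by omega), smul_zero, smul_zero]
        rw [Finset.sum_eq_zero hrest, zero_add]
  -- assemble the power series statement
  refine ⟨PowerSeries.mk c, ?_, ?_, ?_⟩
  · simpa using hc0
  · simpa using hc1
  · refine PowerSeries.ext fun n => ?_
    rw [PowerSeries.coeff_mk, PowerSeries.coeff_mul,
      Finset.Nat.sum_antidiagonal_eq_sum_range_succ_mk, key n]
    refine Finset.sum_congr rfl ?_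
    intro k _
    rw [PowerSeries.coeff_map, PowerSeries.coeff_mk, PowerSeries.coeff_mk,
      ← Polynomial.smul_eq_C_mul]
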